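/- Suppose all signals x, x_m, x̂, k̂, l̂, ŵ, L, r : ℝ → ℝ are differentiable on [0,∞), the plant, reference model, observer, control law and adaptation laws hold for all t ≥ 0, and r is bounded. Suppose there exist constants δ > 0 and δ̂ := a_m·m₁ − δ > 0 with a_m·m₂ − δ ≥ 0, and the observer gain satisfies 0 < L(t) < 4·δ̂·m₂/m₁² for all t ≥ 0. Then the Lyapunov function t ↦ V(t) is nonincreasing on [0,∞) (so e₁, e₂, k̃, l̃, w̃ remain bounded), and moreover e₁(t) → 0 and e₂(t) → 0 as t → ∞. -/

import Mathlib

open Real Filter MeasureTheory intervalIntegral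


lemma barbalat_aux (f : ℝ → ℝ) (K : ℝ) (hK : 0 < K)
    (hcont : ∀ t : ℝ, 0 ≤ t → ContinuousAt f t)
    (hlip : ∀ s t : ℝ, 0 ≤ s → s ≤ t → |f t - f s| ≤ K * (t - s))
    (hint : ∀ ε : ℝ, 0 < ε → ∃ s₀ : ℝ, 0 ≤ s₀ ∧ ∀ s t : ℝ, s₀ ≤ s → s ≤ t →
        (∫ u in s..t, (f u)^2) ≤ ε) :
    Tendsto f atTop (nhds 0) := by
  rw [Metric.tendsto_atTop]
  intro ε hε
  set η : ℝ := ε / (2 * K) with hη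
  have hηpos : 0 < η := by positivity
  obtain ⟨s₀, hs₀, hs₀'⟩ := hint (η * ε ^ 2 / 8) (by positivity)
  refine ⟨s₀, fun t ht => ?_⟩
  rw [Real.dist_eq, sub_zero]
  by_contra hcon
  push_neg at hcon
  have ht0 : (0:ℝ) ≤ t := hs₀.trans ht
  have hKη : K * η = ε / 2 := by
    rw [hη]; field_simp
  have hbound : ∀ u ∈ Set.Icc t (t + η), (ε/2)^2 ≤ (f u)^2 := by
    intro u hu
    have h1 : |f u - f t| ≤ K * (u - t) := hlip t u ht0 hu.1
    have h2 : K * (u - t) ≤ K * η := by nlinarith [hu.2]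
    have h3 : ε / 2 ≤ |f u| := by
      have h4 := abs_sub_abs_le_abs_sub (f t) (f u)
      rw [abs_sub_comm (f t) (f u)] at h4
      linarith
    calc (ε/2)^2 ≤ |f u|^2 := by
          have : (0:ℝ) ≤ ε/2 := by positivity
          exact pow_le_pow_left₀ this h3 2
      _ = (f u)^2 := sq_abs _
  have htt : t ≤ t + η := by linarith
  have hfc : ContinuousOn (fun u => (f u)^2) (Set.uIcc t (t+η)) := by
    rw [Set.uIcc_of_le htt]
    exact (continuousOn_of_forall_continuousAt
      (fun u hu => hcont u (le_trans ht0 hu.1))).pow 2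
  have hii : IntervalIntegrable (fun u => (f u)^2) volume t (t+η) := hfc.intervalIntegrable
  have hlow : η * ((ε/2)^2) ≤ ∫ u in t..t+η, (f u)^2 := by
    have h5 := intervalIntegral.integral_mono_on htt
      (_root_.intervalIntegrable_const (c := (ε/2)^2)) hii hbound
    simpa using h5
  have hupp := hs₀' t (t+η) ht htt
  have : 0 < η * ε^2 := by positivity
  nlinarith


lemma cauchy_int_aux (φ V dV : ℝ → ℝ)
    (hφc : ∀ t : ℝ, 0 ≤ t → ContinuousAt φ t)
    (hφ0 : ∀ t : ℝ, 0 ≤ t → 0 ≤ φ t)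
    (hVd : ∀ t : ℝ, 0 ≤ t → HasDerivAt V (dV t) t)
    (hdVle : ∀ t : ℝ, 0 ≤ t → dV t ≤ -φ t)
    (hV0 : ∀ t : ℝ, 0 ≤ t → 0 ≤ V t) :
    ∀ ε : ℝ, 0 < ε → ∃ s₀ : ℝ, 0 ≤ s₀ ∧ ∀ s t : ℝ, s₀ ≤ s → s ≤ t →
      (∫ u in s..t, φ u) ≤ ε := by
  have hφint : ∀ s t : ℝ, 0 ≤ s → s ≤ t → IntervalIntegrable φ volume s t := by
    intro s t hs hst
    apply ContinuousOn.intervalIntegrable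
    rw [Set.uIcc_of_le hst]
    exact continuousOn_of_forall_continuousAt (fun u hu => hφc u (hs.trans hu.1))
  have key : ∀ s t : ℝ, 0 ≤ s → s ≤ t → (∫ u in s..t, φ u) ≤ V s - V t := by
    intro s t hs hst
    set G : ℝ → ℝ := fun u => V u + ∫ x in s..u, φ x with hG
    have hGanti : AntitoneOn G (Set.Icc s t) := by
      apply antitoneOn_of_deriv_nonpos (convex_Icc s t)
      · apply ContinuousOn.add
        · exact fun u hu => (hVd u (hs.trans hu.1)).continuousAt.continuousWithinAt
        · have h1 : ContinuousOn (fun u => ∫ x in s..u, φ x) (Set.uIcc s t) :=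
            intervalIntegral.continuousOn_primitive_interval' (hφint s t hs hst)
              Set.left_mem_uIcc
          rwa [Set.uIcc_of_le hst] at h1
      all_goals {
        rw [interior_Icc]
        intro u hu
        have hu0 : 0 < u := lt_of_le_of_lt hs hu.1
        have hI : HasDerivAt (fun v => ∫ x in s..v, φ x) (φ u) u := by
          apply intervalIntegral.integral_hasDerivAt_right
            (hφint s u hs hu.1.le)
            (ContinuousAt.stronglyMeasurableAtFilter isOpen_Ioi
              (fun v hv => hφc v (le_of_lt hv)) u hu0)
            (hφc u hu0.le)
        have hGd : HasDerivAt G (dV u + φ u) u := (hVd u hu0.le).add hI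
        first
        | exact hGd.differentiableAt.differentiableWithinAt
        | { rw [hGd.deriv]; have := hdVle u hu0.le; linarith [hφ0 u hu0.le] }
      }
    have h2 := hGanti (Set.left_mem_Icc.2 hst) (Set.right_mem_Icc.2 hst) hst
    simp only [hG, intervalIntegral.integral_same] at h2
    linarith
  set F : ℝ → ℝ := fun t => ∫ u in (0:ℝ)..t, φ u with hF
  have hFadd : ∀ s t : ℝ, 0 ≤ s → s ≤ t → F t - F s = ∫ u in s..t, φ u := by
    intro s t hs hst
    have := intervalIntegral.integral_add_adjacent_intervals
      (hφint 0 s le_rfl hs) (hφint s t hs hst)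
    simp only [hF]; linarith
  have hFmono : ∀ s t : ℝ, 0 ≤ s → s ≤ t → F s ≤ F t := by
    intro s t hs hst
    have h3 : 0 ≤ ∫ u in s..t, φ u :=
      intervalIntegral.integral_nonneg hst (fun u hu => hφ0 u (hs.trans hu.1))
    have := hFadd s t hs hst
    linarith
  have hFbdd : ∀ t : ℝ, 0 ≤ t → F t ≤ V 0 := by
    intro t ht
    have h4 := key 0 t le_rfl ht
    have h5 := hV0 t ht
    simp only [hF]
    linarith
  intro ε hε
  set A : Set ℝ := F '' (Set.Ici 0) with hA
  have hAne : A.Nonempty := ⟨F 0, 0, Set.self_mem_Ici, rfl⟩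
  have hAbdd : BddAbove A := ⟨V 0, by rintro y ⟨s, hs, rfl⟩; exact hFbdd s hs⟩
  obtain ⟨y, hyA, hy⟩ := exists_lt_of_lt_csSup hAne
    (show sSup A - ε < sSup A by linarith)
  obtain ⟨s₀, hs₀, rfl⟩ := hyA
  refine ⟨s₀, hs₀, fun s t hs hst => ?_⟩
  have hs0 : 0 ≤ s := hs₀.trans hs
  rw [← hFadd s t hs0 hst]
  have h6 : F t ≤ sSup A := le_csSup hAbdd ⟨t, hs0.trans hst, rfl⟩
  have h7 : F s₀ ≤ F s := hFmono s₀ s hs₀ hs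
  linarith

lemma xm_bound_aux (aₘ c : ℝ) (xm g : ℝ → ℝ) (ham : 0 < aₘ)
    (hc : ∀ t : ℝ, 0 ≤ t → |g t| ≤ c)
    (hxm : ∀ t : ℝ, 0 ≤ t → HasDerivAt xm (-aₘ * xm t + g t) t) :
    ∀ t : ℝ, 0 ≤ t → |xm t| ≤ |xm 0| + c / aₘ := by
  have hc0 : 0 ≤ c := (abs_nonneg _).trans (hc 0 le_rfl)
  have hexp : ∀ t : ℝ, HasDerivAt (fun s => Real.exp (aₘ*s)) (aₘ * Real.exp (aₘ*t)) t := by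
    intro t
    have h1 := (Real.hasDerivAt_exp (aₘ*t)).comp t ((hasDerivAt_id t).const_mul aₘ)
    refine h1.congr_deriv ?_; symm
    ring
  have hdU : ∀ t : ℝ, 0 ≤ t →
      HasDerivAt (fun s => Real.exp (aₘ*s) * xm s) (Real.exp (aₘ*t) * g t) t := by
    intro t ht
    have h1 := (hexp t).mul (hxm t ht)
    refine h1.congr_deriv ?_; symm
    ring
  intro t ht
  have hE1 : 1 ≤ Real.exp (aₘ*t) := Real.one_le_exp (by positivity)
  have hEp : 0 < Real.exp (aₘ*t) := Real.exp_pos _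
  have habs1 : xm 0 ≤ |xm 0| := le_abs_self _
  have habs2 : -|xm 0| ≤ xm 0 := neg_abs_le _
  have hcd : 0 ≤ c / aₘ := by positivity
  have hup : MonotoneOn (fun s => (c/aₘ) * Real.exp (aₘ*s) - Real.exp (aₘ*s) * xm s)
      (Set.Ici (0:ℝ)) := by
    apply monotoneOn_of_deriv_nonneg (convex_Ici 0)
    · intro s hs
      exact (((hexp s).const_mul (c/aₘ)).sub (hdU s hs)).continuousAt.continuousWithinAt
    · intro s hs
      rw [interior_Ici] at hs
      exact (((hexp s).const_mul (c/aₘ)).sub (hdU s hs.le)).differentiableAt.differentiableWithinAt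
    · intro s hs
      rw [interior_Ici] at hs
      rw [HasDerivAt.deriv (f := fun s => c / aₘ * rexp (aₘ * s) - rexp (aₘ * s) * xm s) (((hexp s).const_mul (c/aₘ)).sub (hdU s hs.le))]
      have h2 := hc s hs.le
      have h3 : g s ≤ c := le_trans (le_abs_self _) h2
      have h4 : 0 < Real.exp (aₘ*s) := Real.exp_pos _
      have : c / aₘ * (aₘ * Real.exp (aₘ*s)) = c * Real.exp (aₘ*s) := by
        field_simp
      rw [this]
      nlinarith
  have hlo : MonotoneOn (fun s => (c/aₘ) * Real.exp (aₘ*s) + Real.exp (aₘ*s) * xm s)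
      (Set.Ici (0:ℝ)) := by
    apply monotoneOn_of_deriv_nonneg (convex_Ici 0)
    · intro s hs
      exact (((hexp s).const_mul (c/aₘ)).add (hdU s hs)).continuousAt.continuousWithinAt
    · intro s hs
      rw [interior_Ici] at hs
      exact (((hexp s).const_mul (c/aₘ)).add (hdU s hs.le)).differentiableAt.differentiableWithinAt
    · intro s hs
      rw [interior_Ici] at hs
      rw [HasDerivAt.deriv (f := fun s => c / aₘ * rexp (aₘ * s) + rexp (aₘ * s) * xm s) (((hexp s).const_mul (c/aₘ)).add (hdU s hs.le))]
      have h2 := hc s hs.le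
      have h3 : -c ≤ g s := neg_le_of_abs_le h2
      have h4 : 0 < Real.exp (aₘ*s) := Real.exp_pos _
      have : c / aₘ * (aₘ * Real.exp (aₘ*s)) = c * Real.exp (aₘ*s) := by
        field_simp
      rw [this]
      nlinarith
  have h5 := hup Set.self_mem_Ici (Set.mem_Ici.2 ht) ht
  have h6 := hlo Set.self_mem_Ici (Set.mem_Ici.2 ht) ht
  simp only [mul_zero, Real.exp_zero, mul_one, one_mul] at h5 h6
  rw [abs_le]
  constructor
  · nlinarith [mul_nonneg (sub_nonneg.2 hE1) (abs_nonneg (xm 0)),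
      mul_nonneg (sub_nonneg.2 hE1) hcd]
  · nlinarith [mul_nonneg (sub_nonneg.2 hE1) (abs_nonneg (xm 0)),
      mul_nonneg (sub_nonneg.2 hE1) hcd]


set_option maxHeartbeats 2000000 in
-- see proof below
/-- Lemma 1 of the paper (KalMRACO without blending).
Under the plant, reference model, observer, control law and adaptation laws,
with the observer gain bounded in `(0, 4·δ̂·m₂/m₁²)`, the Lyapunov function `V`
is nonincreasing on `[0,∞)` and the errors `e₁, e₂` converge to zero. -/
theorem stmt_0
    (a b w aₘ bₘ kstar lstar γ₁ γ₂ γ₃ m₁ m₂ δ : ℝ)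
    (x xm xh kh lh wh L r u : ℝ → ℝ)
    (hb : b ≠ 0) (ham : 0 < aₘ)
    (hγ₁ : 0 < γ₁) (hγ₂ : 0 < γ₂) (hγ₃ : 0 < γ₃)
    (hm₁ : 0 < m₁) (hm₂ : 0 < m₂)
    (hmatch_k : aₘ = b * kstar - a) (hmatch_l : bₘ = lstar * b)
    -- control law u = -k̂·y + l̂·r + ŵ (with y = x)
    (hu : ∀ t, 0 ≤ t → u t = -(kh t) * x t + lh t * r t + wh t)
    -- plant dynamics
    (hplant : ∀ t, 0 ≤ t → HasDerivAt x (a * x t + b * (u t - w)) t)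
    -- reference model
    (hrefm : ∀ t, 0 ≤ t → HasDerivAt xm (-aₘ * xm t + bₘ * r t) t)
    -- observer
    (hobs : ∀ t, 0 ≤ t →
      HasDerivAt xh (-aₘ * xh t + bₘ * r t + L t * (x t - xh t)) t)
    -- adaptation laws
    (hkh : ∀ t, 0 ≤ t →
      HasDerivAt kh (Real.sign b * x t * γ₁ * m₂ * (x t - xh t)) t)
    (hlh : ∀ t, 0 ≤ t →
      HasDerivAt lh (-(Real.sign b) * r t * γ₂ * m₂ * (x t - xh t)) t)
    (hwh : ∀ t, 0 ≤ t →
      HasDerivAt wh (-(Real.sign b) * γ₃ * m₂ * (x t - xh t)) t)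
    -- L differentiable, r bounded
    (hLdiff : ∀ t, 0 ≤ t → DifferentiableAt ℝ L t)
    (hrbdd : ∃ M, ∀ t, 0 ≤ t → |r t| ≤ M)
    -- margin constants
    (hδ : 0 < δ)
    (hδhat : 0 < aₘ * m₁ - δ)
    (hδ2 : 0 ≤ aₘ * m₂ - δ)
    -- observer gain bound
    (hL : ∀ t, 0 ≤ t → 0 < L t ∧ L t < 4 * (aₘ * m₁ - δ) * m₂ / m₁ ^ 2)
    -- error variables and Lyapunov function
    (e₁ e₂ kt lt wt V : ℝ → ℝ)
    (he₁ : e₁ = fun t => xh t - xm t)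
    (he₂ : e₂ = fun t => x t - xh t)
    (hkt : kt = fun t => kh t - kstar)
    (hlt : lt = fun t => lh t - lstar)
    (hwt : wt = fun t => wh t - w)
    (hV : V = fun t => (1/2) * m₁ * (e₁ t) ^ 2 + (1/2) * m₂ * (e₂ t) ^ 2
        + (|b| / (2 * γ₁)) * (kt t) ^ 2 + (|b| / (2 * γ₂)) * (lt t) ^ 2
        + (|b| / (2 * γ₃)) * (wt t) ^ 2) :
    AntitoneOn V (Set.Ici (0 : ℝ)) ∧
    Tendsto e₁ atTop (nhds 0) ∧ Tendsto e₂ atTop (nhds 0) := by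
  have hsb : |b| * Real.sign b = b := by
    rcases hb.lt_or_gt with h | h
    · rw [Real.sign_of_neg h, abs_of_neg h]; ring
    · rw [Real.sign_of_pos h, abs_of_pos h]; ring
  -- derivatives of error signals
  have hde₁ : ∀ t : ℝ, 0 ≤ t → HasDerivAt e₁ (-aₘ * e₁ t + L t * e₂ t) t := by
    intro t ht
    have h := (hobs t ht).sub (hrefm t ht)
    rw [he₁, he₂]
    refine h.congr_deriv ?_; symm
    ring
  have hde₂ : ∀ t : ℝ, 0 ≤ t → HasDerivAt e₂
      (-(aₘ + L t) * e₂ t - b * kt t * x t + b * lt t * r t + b * wt t) t := by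
    intro t ht
    have h := (hplant t ht).sub (hobs t ht)
    rw [hu t ht] at h
    rw [he₂, hkt, hlt, hwt]
    refine h.congr_deriv ?_; symm
    simp only
    linear_combination (-(x t)) * hmatch_k + (r t) * hmatch_l
  have hdkt : ∀ t : ℝ, 0 ≤ t →
      HasDerivAt kt (Real.sign b * x t * γ₁ * m₂ * e₂ t) t := by
    intro t ht; rw [hkt, he₂]; exact (hkh t ht).sub_const kstar
  have hdlt : ∀ t : ℝ, 0 ≤ t →
      HasDerivAt lt (-(Real.sign b) * r t * γ₂ * m₂ * e₂ t) t := by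
    intro t ht; rw [hlt, he₂]; exact (hlh t ht).sub_const lstar
  have hdwt : ∀ t : ℝ, 0 ≤ t →
      HasDerivAt wt (-(Real.sign b) * γ₃ * m₂ * e₂ t) t := by
    intro t ht; rw [hwt, he₂]; exact (hwh t ht).sub_const w
  -- derivative of V
  set D : ℝ → ℝ := fun t => -(aₘ*m₁)*(e₁ t)^2 + m₁ * L t * e₁ t * e₂ t
      - (aₘ + L t)*m₂*(e₂ t)^2 with hD
  have hdV : ∀ t : ℝ, 0 ≤ t → HasDerivAt V (D t) t := by
    intro t ht
    have h1 := hde₁ t ht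
    have h2 := hde₂ t ht
    have h3 := hdkt t ht
    have h4 := hdlt t ht
    have h5 := hdwt t ht
    have hbig := ((((((h1.pow 2).const_mul ((1:ℝ)/2*m₁)).add
        ((h2.pow 2).const_mul ((1:ℝ)/2*m₂))).add
        ((h3.pow 2).const_mul (|b|/(2*γ₁)))).add
        ((h4.pow 2).const_mul (|b|/(2*γ₂)))).add
        ((h5.pow 2).const_mul (|b|/(2*γ₃))))
    rw [hV]
    refine hbig.congr_deriv ?_; symm
    have habs : |b| ≠ 0 := abs_ne_zero.2 hb
    have hsign : Real.sign b = b / |b| := by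
      rw [eq_div_iff habs, mul_comm]; exact hsb
    simp only [hD, hsign, pow_one, Nat.cast_ofNat]
    have hg1 : (γ₁:ℝ) ≠ 0 := ne_of_gt hγ₁
    have hg2 : (γ₂:ℝ) ≠ 0 := ne_of_gt hγ₂
    have hg3 : (γ₃:ℝ) ≠ 0 := ne_of_gt hγ₃
    field_simp
    ring
    -- the dissipation rate
  set φ : ℝ → ℝ := fun t => δ * (e₁ t)^2 + aₘ*m₂*(e₂ t)^2 with hφ
  have hφ0 : ∀ t : ℝ, 0 ≤ t → 0 ≤ φ t := by
    intro t ht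
    simp only [hφ]
    nlinarith [sq_nonneg (e₁ t), sq_nonneg (e₂ t)]
  have hDle : ∀ t : ℝ, 0 ≤ t → D t ≤ -φ t := by
    intro t ht
    obtain ⟨hL1, hL2⟩ := hL t ht
    have hLm : L t * m₁^2 < 4*(aₘ*m₁-δ)*m₂ := by
      rw [lt_div_iff₀ (by positivity)] at hL2
      linarith
    simp only [hD, hφ]
    nlinarith [sq_nonneg (2*(aₘ*m₁-δ)*e₁ t - m₁*L t*e₂ t),
      mul_nonneg (mul_nonneg hL1.le (sub_nonneg.2 hLm.le)) (sq_nonneg (e₂ t)),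
      sq_nonneg (e₁ t), sq_nonneg (e₂ t), hδhat]
  -- V is nonincreasing
  have hVanti : AntitoneOn V (Set.Ici (0:ℝ)) := by
    apply antitoneOn_of_deriv_nonpos (convex_Ici 0)
    · exact fun t ht => (hdV t ht).continuousAt.continuousWithinAt
    · intro t ht
      rw [interior_Ici] at ht
      exact (hdV t (le_of_lt ht)).differentiableAt.differentiableWithinAt
    · intro t ht
      rw [interior_Ici] at ht
      rw [(hdV t (le_of_lt ht)).deriv]
      have h1 := hDle t (le_of_lt ht)
      have h2 := hφ0 t (le_of_lt ht)
      linarith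
  have habs0 : (0:ℝ) ≤ |b| := abs_nonneg b
  have habsp : (0:ℝ) < |b| := abs_pos.2 hb
  have hVpos : ∀ t : ℝ, 0 ≤ V t := by
    intro t; rw [hV]
    have h1 := mul_nonneg hm₁.le (sq_nonneg (e₁ t))
    have h2 := mul_nonneg hm₂.le (sq_nonneg (e₂ t))
    have h3 := mul_nonneg (div_nonneg habs0 (by linarith : (0:ℝ) ≤ 2*γ₁)) (sq_nonneg (kt t))
    have h4 := mul_nonneg (div_nonneg habs0 (by linarith : (0:ℝ) ≤ 2*γ₂)) (sq_nonneg (lt t))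
    have h5 := mul_nonneg (div_nonneg habs0 (by linarith : (0:ℝ) ≤ 2*γ₃)) (sq_nonneg (wt t))
    linarith
  have hVle : ∀ t : ℝ, 0 ≤ t → V t ≤ V 0 := fun t ht =>
    hVanti Set.self_mem_Ici ht ht
  -- uniform bounds on the error signals
  have hbd : ∀ (c : ℝ) (f : ℝ → ℝ), 0 < c → (∀ t : ℝ, 0 ≤ t → c * (f t)^2 ≤ V 0) →
      ∀ t : ℝ, 0 ≤ t → |f t| ≤ Real.sqrt (V 0 / c) := by
    intro c f hc hf t ht
    have h1 : (f t)^2 ≤ V 0 / c := by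
      rw [le_div_iff₀ hc]; linarith [hf t ht]
    calc |f t| = Real.sqrt ((f t)^2) := (Real.sqrt_sq_eq_abs _).symm
      _ ≤ Real.sqrt (V 0 / c) := Real.sqrt_le_sqrt h1
  have hterm : ∀ t : ℝ, 0 ≤ t →
      (1/2*m₁) * (e₁ t)^2 ≤ V 0 ∧ (1/2*m₂) * (e₂ t)^2 ≤ V 0 ∧
      (|b|/(2*γ₁)) * (kt t)^2 ≤ V 0 ∧ (|b|/(2*γ₂)) * (lt t)^2 ≤ V 0 ∧
      (|b|/(2*γ₃)) * (wt t)^2 ≤ V 0 := by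
    intro t ht
    have h := hVle t ht
    rw [hV] at h
    simp only at h
    have h1 := mul_nonneg hm₁.le (sq_nonneg (e₁ t))
    have h2 := mul_nonneg hm₂.le (sq_nonneg (e₂ t))
    have h3 := mul_nonneg (div_nonneg habs0 (by linarith : (0:ℝ) ≤ 2*γ₁)) (sq_nonneg (kt t))
    have h4 := mul_nonneg (div_nonneg habs0 (by linarith : (0:ℝ) ≤ 2*γ₂)) (sq_nonneg (lt t))
    have h5 := mul_nonneg (div_nonneg habs0 (by linarith : (0:ℝ) ≤ 2*γ₃)) (sq_nonneg (wt t))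
    refine ⟨?_, ?_, ?_, ?_, ?_⟩ <;> · rw [hV]; simp only; linarith
  set B1 : ℝ := Real.sqrt (V 0 / (1/2*m₁)) with hB1
  set B2 : ℝ := Real.sqrt (V 0 / (1/2*m₂)) with hB2
  set Bk : ℝ := Real.sqrt (V 0 / (|b|/(2*γ₁))) with hBk
  set Bl : ℝ := Real.sqrt (V 0 / (|b|/(2*γ₂))) with hBl
  set Bw : ℝ := Real.sqrt (V 0 / (|b|/(2*γ₃))) with hBw
  have hB1nn : 0 ≤ B1 := Real.sqrt_nonneg _
  have hB2nn : 0 ≤ B2 := Real.sqrt_nonneg _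
  have hBknn : 0 ≤ Bk := Real.sqrt_nonneg _
  have hBlnn : 0 ≤ Bl := Real.sqrt_nonneg _
  have hBwnn : 0 ≤ Bw := Real.sqrt_nonneg _
  have he₁bd : ∀ t : ℝ, 0 ≤ t → |e₁ t| ≤ B1 :=
    hbd _ e₁ (by linarith) (fun t ht => (hterm t ht).1)
  have he₂bd : ∀ t : ℝ, 0 ≤ t → |e₂ t| ≤ B2 :=
    hbd _ e₂ (by linarith) (fun t ht => (hterm t ht).2.1)
  have hktbd : ∀ t : ℝ, 0 ≤ t → |kt t| ≤ Bk :=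
    hbd _ kt (by positivity) (fun t ht => (hterm t ht).2.2.1)
  have hltbd : ∀ t : ℝ, 0 ≤ t → |lt t| ≤ Bl :=
    hbd _ lt (by positivity) (fun t ht => (hterm t ht).2.2.2.1)
  have hwtbd : ∀ t : ℝ, 0 ≤ t → |wt t| ≤ Bw :=
    hbd _ wt (by positivity) (fun t ht => (hterm t ht).2.2.2.2)
  -- bound on the reference signal and xm
  obtain ⟨M, hM⟩ := hrbdd
  have hM0 : 0 ≤ M := (abs_nonneg _).trans (hM 0 le_rfl)
  have hxmbd : ∀ t : ℝ, 0 ≤ t → |xm t| ≤ |xm 0| + (|bₘ| * M) / aₘ := by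
    apply xm_bound_aux aₘ (|bₘ| * M) xm (fun t => bₘ * r t) ham
    · intro t ht
      rw [abs_mul]
      exact mul_le_mul_of_nonneg_left (hM t ht) (abs_nonneg _)
    · exact hrefm
  set Bxm : ℝ := |xm 0| + (|bₘ| * M) / aₘ with hBxm
  have hBxmnn : 0 ≤ Bxm := (abs_nonneg _).trans (hxmbd 0 le_rfl)
  -- bound on x
  have hxbd : ∀ t : ℝ, 0 ≤ t → |x t| ≤ B2 + B1 + Bxm := by
    intro t ht
    have h1 : x t = e₂ t + e₁ t + xm t := by
      rw [he₁, he₂]; ring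
    rw [h1]
    calc |e₂ t + e₁ t + xm t| ≤ |e₂ t + e₁ t| + |xm t| := abs_add_le _ _
      _ ≤ |e₂ t| + |e₁ t| + |xm t| := by linarith [abs_add_le (e₂ t) (e₁ t)]
      _ ≤ B2 + B1 + Bxm := by
          linarith [he₂bd t ht, he₁bd t ht, hxmbd t ht]
  set Bx : ℝ := B2 + B1 + Bxm with hBx
  have hBxnn : 0 ≤ Bx := by positivity
  -- bound on L
  set Lmax : ℝ := 4 * (aₘ * m₁ - δ) * m₂ / m₁ ^ 2 with hLmax
  have hLmaxnn : 0 ≤ Lmax := by positivity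
  have hmulb : ∀ p q P Q : ℝ, |p| ≤ P → |q| ≤ Q → |p * q| ≤ P * Q := by
    intro p q P Q h1 h2
    rw [abs_mul]
    exact mul_le_mul h1 h2 (abs_nonneg q) ((abs_nonneg p).trans h1)
  -- Lipschitz constants
  set K1 : ℝ := aₘ * B1 + Lmax * B2 + 1 with hK1
  have hK1pos : 0 < K1 := by positivity
  set K2 : ℝ := (aₘ + Lmax) * B2 + |b| * Bk * Bx + |b| * Bl * M + |b| * Bw + 1 with hK2
  have hK2pos : 0 < K2 := by positivity
  have hlip1 : ∀ s t : ℝ, 0 ≤ s → s ≤ t → |e₁ t - e₁ s| ≤ K1 * (t - s) := by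
    intro s t hs hst
    have hbound : ∀ v ∈ Set.Ici (0:ℝ), ‖-aₘ * e₁ v + L v * e₂ v‖ ≤ K1 := by
      intro v hv
      have hv0 : (0:ℝ) ≤ v := hv
      obtain ⟨hLp, hLlt⟩ := hL v hv0
      rw [Real.norm_eq_abs]
      calc |(-aₘ) * e₁ v + L v * e₂ v| ≤ |(-aₘ) * e₁ v| + |L v * e₂ v| := abs_add_le _ _
        _ ≤ aₘ * B1 + Lmax * B2 := by
            have h1 : |(-aₘ) * e₁ v| ≤ aₘ * B1 := by
              rw [abs_mul, abs_neg, abs_of_pos ham]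
              exact mul_le_mul_of_nonneg_left (he₁bd v hv0) ham.le
            have h2 : |L v * e₂ v| ≤ Lmax * B2 := by
              rw [abs_mul, abs_of_pos hLp]
              exact mul_le_mul hLlt.le (he₂bd v hv0) (abs_nonneg _) hLmaxnn
            linarith
        _ ≤ K1 := by rw [hK1]; linarith
    have h := (convex_Ici (0:ℝ)).norm_image_sub_le_of_norm_hasDerivWithin_le
      (fun v hv => (hde₁ v hv).hasDerivWithinAt) hbound
      (Set.mem_Ici.2 hs) (Set.mem_Ici.2 (hs.trans hst))
    rw [Real.norm_eq_abs, Real.norm_eq_abs] at h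
    calc |e₁ t - e₁ s| ≤ K1 * |t - s| := h
      _ = K1 * (t - s) := by rw [abs_of_nonneg (by linarith)]
  have hlip2 : ∀ s t : ℝ, 0 ≤ s → s ≤ t → |e₂ t - e₂ s| ≤ K2 * (t - s) := by
    intro s t hs hst
    have hbound : ∀ v ∈ Set.Ici (0:ℝ),
        ‖-(aₘ + L v) * e₂ v - b * kt v * x v + b * lt v * r v + b * wt v‖ ≤ K2 := by
      intro v hv
      have hv0 : (0:ℝ) ≤ v := hv
      obtain ⟨hLp, hLlt⟩ := hL v hv0
      rw [Real.norm_eq_abs]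
      have h1 : |-(aₘ + L v) * e₂ v| ≤ (aₘ + Lmax) * B2 := by
        rw [abs_mul, abs_neg, abs_of_pos (by linarith : (0:ℝ) < aₘ + L v)]
        exact mul_le_mul (by linarith) (he₂bd v hv0) (abs_nonneg _) (by linarith)
      have h2 : |b * kt v * x v| ≤ |b| * Bk * Bx := by
        apply hmulb _ _ _ _ _ (hxbd v hv0)
        rw [abs_mul]
        exact mul_le_mul_of_nonneg_left (hktbd v hv0) habs0
      have h3 : |b * lt v * r v| ≤ |b| * Bl * M := by
        apply hmulb _ _ _ _ _ (hM v hv0)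
        rw [abs_mul]
        exact mul_le_mul_of_nonneg_left (hltbd v hv0) habs0
      have h4 : |b * wt v| ≤ |b| * Bw := by
        rw [abs_mul]
        exact mul_le_mul_of_nonneg_left (hwtbd v hv0) habs0
      calc |-(aₘ + L v) * e₂ v - b * kt v * x v + b * lt v * r v + b * wt v|
          ≤ |-(aₘ + L v) * e₂ v - b * kt v * x v + b * lt v * r v| + |b * wt v| :=
            abs_add_le _ _
        _ ≤ |-(aₘ + L v) * e₂ v - b * kt v * x v| + |b * lt v * r v| + |b * wt v| := by
            linarith [abs_add_le (-(aₘ + L v) * e₂ v - b * kt v * x v) (b * lt v * r v)]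
        _ ≤ |-(aₘ + L v) * e₂ v| + |b * kt v * x v| + |b * lt v * r v| + |b * wt v| := by
            linarith [abs_sub (-(aₘ + L v) * e₂ v) (b * kt v * x v)]
        _ ≤ K2 := by rw [hK2]; linarith
    have h := (convex_Ici (0:ℝ)).norm_image_sub_le_of_norm_hasDerivWithin_le
      (fun v hv => (hde₂ v hv).hasDerivWithinAt) hbound
      (Set.mem_Ici.2 hs) (Set.mem_Ici.2 (hs.trans hst))
    rw [Real.norm_eq_abs, Real.norm_eq_abs] at h
    calc |e₂ t - e₂ s| ≤ K2 * |t - s| := h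
      _ = K2 * (t - s) := by rw [abs_of_nonneg (by linarith)]
  -- the Cauchy property of the dissipation integral
  have hφc : ∀ t : ℝ, 0 ≤ t → ContinuousAt φ t := by
    intro t ht
    rw [hφ]
    exact ((((hde₁ t ht).continuousAt.pow 2).const_mul δ).add
      (((hde₂ t ht).continuousAt.pow 2).const_mul (aₘ*m₂)))
  have hcauchy := cauchy_int_aux φ V D hφc hφ0 hdV hDle (fun t ht => hVpos t)
  have he₁c : ∀ t : ℝ, 0 ≤ t → ContinuousAt e₁ t := fun t ht => (hde₁ t ht).continuousAt
  have he₂c : ∀ t : ℝ, 0 ≤ t → ContinuousAt e₂ t := fun t ht => (hde₂ t ht).continuousAt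
  -- L² Cauchy property for each error
  have hsqint : ∀ (f : ℝ → ℝ) (c : ℝ), 0 < c →
      (∀ t : ℝ, 0 ≤ t → ContinuousAt f t) →
      (∀ v : ℝ, 0 ≤ v → c * (f v)^2 ≤ φ v) →
      ∀ ε : ℝ, 0 < ε → ∃ s₀ : ℝ, 0 ≤ s₀ ∧ ∀ s t : ℝ, s₀ ≤ s → s ≤ t →
        (∫ u in s..t, (f u)^2) ≤ ε := by
    intro f c hc hfc hfφ ε hε
    obtain ⟨s₀, hs₀, hs₀'⟩ := hcauchy (c * ε) (by positivity)
    refine ⟨s₀, hs₀, fun s t hs hst => ?_⟩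
    have hs0 : (0:ℝ) ≤ s := hs₀.trans hs
    have hfint : IntervalIntegrable (fun u => (f u)^2) MeasureTheory.volume s t := by
      apply ContinuousOn.intervalIntegrable
      rw [Set.uIcc_of_le hst]
      exact (continuousOn_of_forall_continuousAt
        (fun v hv => hfc v (hs0.trans hv.1))).pow 2
    have hφint : IntervalIntegrable φ MeasureTheory.volume s t := by
      apply ContinuousOn.intervalIntegrable
      rw [Set.uIcc_of_le hst]
      exact continuousOn_of_forall_continuousAt (fun v hv => hφc v (hs0.trans hv.1))
    have h1 : (∫ u in s..t, c * (f u)^2) ≤ ∫ u in s..t, φ u := by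
      apply intervalIntegral.integral_mono_on hst (hfint.const_mul c) hφint
      intro v hv
      exact hfφ v (hs0.trans hv.1)
    rw [intervalIntegral.integral_const_mul] at h1
    have h2 := hs₀' s t hs hst
    have h3 : c * (∫ u in s..t, (f u)^2) ≤ c * ε := by linarith
    exact le_of_mul_le_mul_left h3 hc
  refine ⟨hVanti, ?_, ?_⟩
  · -- e₁ → 0
    apply barbalat_aux e₁ K1 hK1pos he₁c hlip1
    apply hsqint e₁ δ hδ he₁c
    intro v hv
    simp only [hφ]
    nlinarith [sq_nonneg (e₂ v)]
  · -- e₂ → 0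
    apply barbalat_aux e₂ K2 hK2pos he₂c hlip2
    apply hsqint e₂ (aₘ*m₂) (by positivity) he₂c
    intro v hv
    simp only [hφ]
    nlinarith [sq_nonneg (e₁ v)]
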